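/- arXiv:1211.2009 — 3 statements merged into one kernel-verified Lean document; each statement's English description precedes it below -/
import Mathlib

section
/- Let d : Fin N → ℝ≥0 and d' : Fin N → ℝ with Σᵢ dᵢ = 1 and Σᵢ dᵢ·(d'ᵢ)² < 1. Then the affine self-similarity map on L²([0,1], μ) (μ a probability measure adapted to the subdivision) given by (S P)(x) = β'ᵢ + d'ᵢ · P((x−αᵢ)/aᵢ) on the i-th subinterval is a contraction, and hence has a unique fixed point P ∈ L²([0,1], μ). -/
open MeasureTheory Set Finset

noncomputable def stmt7AffEquiv (c b : ℝ) (hb : b ≠ 0) : ℝ ≃ᵐ ℝ :=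
  Homeomorph.toMeasurableEquiv
    { toFun := fun x => c + b * x
      invFun := fun y => (y - c) / b
      left_inv := fun x => by field_simp; ring
      right_inv := fun y => by field_simp; ring
      continuous_toFun := by continuity
      continuous_invFun := by continuity }

lemma stmt7AffEquiv_apply (c b : ℝ) (hb : b ≠ 0) (x : ℝ) :
    stmt7AffEquiv c b hb x = c + b * x := rfl

/-- Under `Σ dᵢ = 1` and `Σ dᵢ (d'ᵢ)² < 1`, the affine
self-similarity map `(S P)(x) = β'ᵢ + d'ᵢ · P((x − αᵢ)/aᵢ)` on the `i`-th
subinterval is a contraction on `L²([0,1], μ)` (with contraction constant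
`√(Σ dᵢ (d'ᵢ)²)`), hence admits a unique (`μ`-a.e.) fixed point `P`. -/
theorem stmt7 {N : ℕ} (a : Fin N → ℝ) (d : Fin N → NNReal) (d' β' : Fin N → ℝ)
    (α : Fin N → ℝ) (ha : ∀ i, 0 < a i) (hα : ∀ i, α i = ∑ k ∈ Finset.Iio i, a k)
    (hsuma : ∑ i, a i = 1) (hsumd : ∑ i, (d i : ℝ) = 1)
    (hcontr : ∑ i, (d i : ℝ) * (d' i) ^ 2 < 1)
    (μ : Measure ℝ) [IsProbabilityMeasure μ]
    (hsupp : μ (Icc 0 1)ᶜ = 0)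
    (hμ : ∀ i : Fin N, μ.restrict (Ico (α i) (α i + a i)) =
        (d i) • μ.map (fun x => α i + a i * x))
    (S : (ℝ → ℝ) → (ℝ → ℝ))
    (hS : ∀ P : ℝ → ℝ, ∀ i : Fin N, ∀ x ∈ Ico (α i) (α i + a i),
        S P x = β' i + d' i * P ((x - α i) / a i)) :
    (∀ P Q : ℝ → ℝ, MemLp P 2 μ → MemLp Q 2 μ →
        eLpNorm (S P - S Q) 2 μ ≤
          ENNReal.ofReal (Real.sqrt (∑ i, (d i : ℝ) * (d' i) ^ 2)) *
            eLpNorm (P - Q) 2 μ) ∧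
    (∃ P : ℝ → ℝ, MemLp P 2 μ ∧ S P =ᵐ[μ] P ∧
        ∀ Q : ℝ → ℝ, MemLp Q 2 μ → S Q =ᵐ[μ] Q → Q =ᵐ[μ] P) := by
  haveI : Fact ((1:ENNReal) ≤ 2) := ⟨one_le_two⟩
  set C : ℝ := ∑ i, (d i : ℝ) * (d' i) ^ 2 with hCdef
  have hC0 : 0 ≤ C :=
    Finset.sum_nonneg fun i _ => mul_nonneg (d i).coe_nonneg (sq_nonneg _)
  set s : Fin N → Set ℝ := fun i => Ico (α i) (α i + a i) with hsdef
  have hsm : ∀ i, MeasurableSet (s i) := fun i => measurableSet_Ico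
  -- the subintervals are pairwise disjoint
  have hmono : ∀ i j : Fin N, i < j → α i + a i ≤ α j := by
    intro i j hij
    rw [hα, hα]
    have hins : insert i (Finset.Iio i) ⊆ Finset.Iio j := by
      intro k hk
      simp only [Finset.mem_insert, Finset.mem_Iio] at hk ⊢
      rcases hk with rfl | hk
      · exact hij
      · exact hk.trans hij
    have : ∑ k ∈ insert i (Finset.Iio i), a k ≤ ∑ k ∈ Finset.Iio j, a k :=
      Finset.sum_le_sum_of_subset_of_nonneg hins fun k _ _ => (ha k).le
    rwa [Finset.sum_insert (by simp), add_comm] at this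
  have hdisjlt : ∀ i j : Fin N, i < j → Disjoint (s i) (s j) := by
    intro i j hij
    apply Set.disjoint_left.2
    rintro x ⟨_, hx2⟩ ⟨hx3, _⟩
    exact absurd ((hmono i j hij).trans hx3) (not_le.2 hx2)
  have hdisj : Pairwise (Function.onFun Disjoint s) := by
    intro i j hij
    rcases hij.lt_or_gt with h | h
    · exact hdisjlt i j h
    · exact (hdisjlt j i h).symm
  have hmeasaff : ∀ i : Fin N, Measurable (fun x : ℝ => α i + a i * x) := by
    intro i; fun_prop
  -- each subinterval has measure dᵢ
  have hμs : ∀ i, μ (s i) = (d i : ENNReal) := by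
    intro i
    have h1 := congrArg (fun ν : Measure ℝ => ν Set.univ) (hμ i)
    simp only [Measure.restrict_apply_univ, Measure.smul_apply] at h1
    rw [Measure.map_apply (hmeasaff i) MeasurableSet.univ, Set.preimage_univ, measure_univ,
      ENNReal.smul_def, smul_eq_mul, mul_one] at h1
    exact h1
  have hd1 : (∑ i, d i) = (1 : NNReal) := by
    apply NNReal.coe_injective; push_cast; exact hsumd
  -- almost every point lies in the union of the subintervals
  have hU : μ (⋃ i, s i) = 1 := by
    rw [measure_iUnion hdisj hsm, tsum_fintype]
    simp_rw [hμs]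
    rw [← ENNReal.coe_finset_sum, hd1, ENNReal.coe_one]
  have hcover : μ (⋃ i, s i)ᶜ = 0 := by
    rw [measure_compl (MeasurableSet.iUnion hsm) (measure_ne_top μ _), hU,
      measure_univ, tsub_self]
  have hae : ∀ᵐ x ∂μ, x ∈ ⋃ i, s i := by
    rw [ae_iff]
    convert hcover using 2
    rfl
  -- change of variables on each piece
  have hmapeq : ∀ i : Fin N, μ.map (fun x => α i + a i * x)
      = μ.map (stmt7AffEquiv (α i) (a i) (ha i).ne') := fun i => rfl
  have hpiece : ∀ (i : Fin N) (g : ℝ → ENNReal),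
      ∫⁻ x in s i, g x ∂μ = (d i : ENNReal) * ∫⁻ y, g (α i + a i * y) ∂μ := by
    intro i g
    have h1 : μ.restrict (s i) = (d i : ENNReal) •
        μ.map (stmt7AffEquiv (α i) (a i) (ha i).ne') := by
      rw [hsdef]
      exact (hμ i).trans (ENNReal.smul_def (d i) _)
    rw [h1, lintegral_smul_measure,
      (stmt7AffEquiv (α i) (a i) (ha i).ne').measurableEmbedding.lintegral_map]
    rfl
  -- decomposition of the integral
  have hdecomp : ∀ g : ℝ → ENNReal,
      ∫⁻ x, g x ∂μ = ∑ i, ∫⁻ x in s i, g x ∂μ := by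
    intro g
    rw [← tsum_fintype (L := SummationFilter.unconditional (Fin N)), ← lintegral_iUnion hsm hdisj g,
      Measure.restrict_eq_self_of_ae_mem hae]
  -- the constant as ENNReal
  have hconst : ∀ i : Fin N,
      ((‖d' i‖₊ : ENNReal)) ^ (2:ℝ) = ENNReal.ofReal ((d' i) ^ 2) := by
    intro i
    rw [← ENNReal.coe_rpow_of_nonneg _ (by norm_num : (0:ℝ) ≤ 2)]
    rw [ENNReal.ofReal]
    congr 1
    apply NNReal.coe_injective
    rw [NNReal.coe_rpow, coe_nnnorm, Real.norm_eq_abs,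
      Real.coe_toNNReal _ (sq_nonneg _), Real.rpow_two, sq_abs]
  -- the key identity
  have hkey : ∀ P Q : ℝ → ℝ,
      ∫⁻ x, (‖S P x - S Q x‖₊ : ENNReal) ^ (2:ℝ) ∂μ
        = ENNReal.ofReal C * ∫⁻ x, (‖P x - Q x‖₊ : ENNReal) ^ (2:ℝ) ∂μ := by
    intro P Q
    rw [hdecomp]
    have hterm : ∀ i : Fin N,
        ∫⁻ x in s i, (‖S P x - S Q x‖₊ : ENNReal) ^ (2:ℝ) ∂μ
          = ENNReal.ofReal ((d i : ℝ) * (d' i) ^ 2) *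
              ∫⁻ x, (‖P x - Q x‖₊ : ENNReal) ^ (2:ℝ) ∂μ := by
      intro i
      have hcong : ∫⁻ x in s i, (‖S P x - S Q x‖₊ : ENNReal) ^ (2:ℝ) ∂μ
          = ∫⁻ x in s i,
              (‖d' i‖₊ : ENNReal) ^ (2:ℝ) *
                (‖P ((x - α i)/a i) - Q ((x - α i)/a i)‖₊ : ENNReal) ^ (2:ℝ) ∂μ := by
        apply setLIntegral_congr_fun (hsm i)
        intro x hx
        dsimp only
        rw [hS P i x hx, hS Q i x hx]
        rw [← ENNReal.mul_rpow_of_nonneg _ _ (by norm_num : (0:ℝ) ≤ 2),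
          ← ENNReal.coe_mul, ← nnnorm_mul]
        congr 3
        ring
      rw [hcong, hpiece i]
      have hsimp : ∀ y : ℝ, (α i + a i * y - α i) / a i = y := by
        intro y
        rw [add_sub_cancel_left, mul_div_cancel_left₀ _ (ha i).ne']
      simp_rw [hsimp]
      rw [lintegral_const_mul' _ _ (by
        rw [hconst i]; exact ENNReal.ofReal_ne_top)]
      rw [hconst i, ← mul_assoc, ← ENNReal.ofReal_coe_nnreal,
        ← ENNReal.ofReal_mul (d i).coe_nonneg]
    rw [Finset.sum_congr rfl fun i _ => hterm i, ← Finset.sum_mul,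
      ← ENNReal.ofReal_sum_of_nonneg
        fun i _ => mul_nonneg (d i).coe_nonneg (sq_nonneg _)]
  -- the main norm identity
  have hbound : ∀ P Q : ℝ → ℝ,
      eLpNorm (S P - S Q) 2 μ
        = ENNReal.ofReal (Real.sqrt C) * eLpNorm (P - Q) 2 μ := by
    intro P Q
    rw [eLpNorm_eq_lintegral_rpow_enorm_toReal two_ne_zero ENNReal.ofNat_ne_top,
      eLpNorm_eq_lintegral_rpow_enorm_toReal two_ne_zero ENNReal.ofNat_ne_top]
    have h2 : (2 : ENNReal).toReal = (2:ℝ) := by norm_num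
    simp only [h2, Pi.sub_apply, enorm_eq_nnnorm]
    rw [hkey P Q, ENNReal.mul_rpow_of_nonneg _ _ (by norm_num : (0:ℝ) ≤ 1/2)]
    congr 1
    rw [ENNReal.ofReal_rpow_of_nonneg hC0 (by norm_num : (0:ℝ) ≤ 1/2)]
    congr 1
    rw [Real.sqrt_eq_rpow]
  have hC1 : Real.sqrt C < 1 := by
    have := Real.sqrt_lt_sqrt hC0 hcontr
    rwa [Real.sqrt_one] at this
  -- S preserves Memℒp
  have hSmem : ∀ P : ℝ → ℝ, MemLp P 2 μ → MemLp (S P) 2 μ := by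
    intro P hP
    set G : ℝ → ℝ := fun x => ∑ i, (s i).indicator
      (fun y => β' i + d' i * P ((y - α i)/a i)) x with hGdef
    have hGmem : MemLp G 2 μ := by
      apply memLp_finset_sum
      intro i _
      rw [memLp_indicator_iff_restrict (hsm i)]
      have h1 : μ.restrict (s i) = (d i : ENNReal) •
          μ.map (stmt7AffEquiv (α i) (a i) (ha i).ne') := by
        rw [hsdef]
        exact (hμ i).trans (ENNReal.smul_def (d i) _)
      rw [h1]
      apply MemLp.smul_measure _ ENNReal.coe_ne_top
      rw [(stmt7AffEquiv (α i) (a i)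
        (ha i).ne').measurableEmbedding.memLp_map_measure_iff]
      have heq : ((fun y => β' i + d' i * P ((y - α i)/a i)) ∘
          (stmt7AffEquiv (α i) (a i) (ha i).ne'))
            = fun x => β' i + d' i * P x := by
        funext x
        simp only [Function.comp_apply, stmt7AffEquiv_apply]
        rw [add_sub_cancel_left, mul_div_cancel_left₀ _ (ha i).ne']
      rw [heq]
      exact (memLp_const (β' i)).add (hP.const_mul (d' i))
    have haeG : S P =ᵐ[μ] G := by
      filter_upwards [hae] with x hx
      obtain ⟨j, hj⟩ := mem_iUnion.1 hx
      rw [hGdef]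
      simp only []
      rw [Finset.sum_eq_single j]
      · rw [Set.indicator_of_mem hj, hS P j x hj]
      · intro i _ hij
        exact Set.indicator_of_notMem
          (fun hmem => Set.disjoint_left.1 (hdisj hij) hmem hj) _
      · intro h; exact absurd (Finset.mem_univ j) h
    exact hGmem.ae_eq haeG.symm
  -- part 1
  refine ⟨fun P Q _ _ => le_of_eq (hbound P Q), ?_⟩
  -- fixed point via Banach
  set K : NNReal := (Real.sqrt C).toNNReal with hKdef
  have hKc : (K : ENNReal) = ENNReal.ofReal (Real.sqrt C) := rfl
  have hK1 : K < 1 := by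
    rw [← NNReal.coe_lt_coe, hKdef, Real.coe_toNNReal _ (Real.sqrt_nonneg _)]
    exact hC1
  set F : Lp ℝ 2 μ → Lp ℝ 2 μ :=
    fun f => MemLp.toLp (S f) (hSmem f (Lp.memLp f)) with hFdef
  have hlip : LipschitzWith K F := by
    intro f g
    rw [Lp.edist_def, Lp.edist_def, hKc]
    have h1 : eLpNorm ((F f : ℝ → ℝ) - (F g : ℝ → ℝ)) 2 μ
        = eLpNorm (S f - S g) 2 μ := by
      apply eLpNorm_congr_ae
      filter_upwards [MemLp.coeFn_toLp (hSmem f (Lp.memLp f)),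
        MemLp.coeFn_toLp (hSmem g (Lp.memLp g))] with x hx1 hx2
      simp only [Pi.sub_apply, hFdef, hx1, hx2]
    rw [h1, hbound]
  have hcw : ContractingWith K F := ⟨hK1, hlip⟩
  set P0 : Lp ℝ 2 μ := ContractingWith.fixedPoint F hcw with hP0def
  have hfix : F P0 = P0 := hcw.fixedPoint_isFixedPt
  have hPmem : MemLp (P0 : ℝ → ℝ) 2 μ := Lp.memLp P0
  have hfixae : S (P0 : ℝ → ℝ) =ᵐ[μ] (P0 : ℝ → ℝ) := by
    have h1 : ((F P0 : Lp ℝ 2 μ) : ℝ → ℝ) =ᵐ[μ] S (P0 : ℝ → ℝ) :=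
      MemLp.coeFn_toLp _
    rw [hfix] at h1
    exact h1.symm
  refine ⟨(P0 : ℝ → ℝ), hPmem, hfixae, ?_⟩
  intro Q hQ hQfix
  have h1 : eLpNorm (Q - (P0 : ℝ → ℝ)) 2 μ
      = eLpNorm (S Q - S (P0 : ℝ → ℝ)) 2 μ := by
    apply eLpNorm_congr_ae
    filter_upwards [hQfix, hfixae] with x hx1 hx2
    simp only [Pi.sub_apply, hx1, hx2]
  by_cases hz : eLpNorm (Q - (P0 : ℝ → ℝ)) 2 μ = 0
  · have h2 := (eLpNorm_eq_zero_iff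
      ((hQ.sub hPmem).aestronglyMeasurable) two_ne_zero).1 hz
    filter_upwards [h2] with x hx
    simpa [Pi.sub_apply, sub_eq_zero] using hx
  · exfalso
    have hlt : eLpNorm (Q - (P0 : ℝ → ℝ)) 2 μ
        < eLpNorm (Q - (P0 : ℝ → ℝ)) 2 μ := by
      calc eLpNorm (Q - (P0 : ℝ → ℝ)) 2 μ
          = ENNReal.ofReal (Real.sqrt C) * eLpNorm (Q - (P0 : ℝ → ℝ)) 2 μ :=
            h1.trans (hbound Q (P0 : ℝ → ℝ))
        _ < 1 * eLpNorm (Q - (P0 : ℝ → ℝ)) 2 μ := by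
            apply ENNReal.mul_lt_mul_left hz (hQ.sub hPmem).eLpNorm_ne_top
            rw [← ENNReal.ofReal_one]
            exact ENNReal.ofReal_lt_ofReal_iff_of_nonneg (Real.sqrt_nonneg _)
              |>.2 hC1
        _ = eLpNorm (Q - (P0 : ℝ → ℝ)) 2 μ := one_mul _
    exact lt_irrefl _ hlt
end

section
/- Let f be a finite nonnegative Borel measure on [0,1] and r a finite nonnegative Borel measure with no common atoms with f. Then for every ε > 0 there exists a finite partition 0 = ζ₀ < ζ₁ < … < ζ_{n+1} = 1 by points that are atoms of neither f nor r, such that for each k, either f([ζ_k, ζ_{k+1}]) < ε³ or r([ζ_k, ζ_{k+1}]) < ε². -/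
open MeasureTheory Set

lemma exists_notMem_countable (S : Set ℝ) (hS : S.Countable) {u v : ℝ} (h : u < v) :
    ∃ y, y ∈ Ioo u v ∧ y ∉ S := by
  by_contra hcon
  push_neg at hcon
  have hsub : Ioo u v ⊆ S := fun y hy => hcon y hy
  have : (Ioo u v).Countable := hS.mono hsub
  rw [← Cardinal.le_aleph0_iff_set_countable, Cardinal.mk_Ioo_real h] at this
  exact absurd this (not_le.mpr Cardinal.aleph0_lt_continuum)

lemma key_lemma (f r : Measure ℝ) [IsFiniteMeasure f] [IsFiniteMeasure r]
    (hatoms : ∀ x : ℝ, f {x} = 0 ∨ r {x} = 0)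
    {δf δr : ENNReal} (hδf : 0 < δf) (hδr : 0 < δr) (x : ℝ) :
    ∃ a b : ℝ, a < x ∧ x < b ∧ f {a} = 0 ∧ r {a} = 0 ∧ f {b} = 0 ∧ r {b} = 0 ∧
      (f (Icc a b) < δf ∨ r (Icc a b) < δr) := by
  have hSf : {y : ℝ | 0 < f {y}}.Countable := by
    have := Measure.countable_meas_level_set_pos (μ := f) (g := (id : ℝ → ℝ)) measurable_id
    simpa [Set.setOf_eq_eq_singleton] using this
  have hSr : {y : ℝ | 0 < r {y}}.Countable := by
    have := Measure.countable_meas_level_set_pos (μ := r) (g := (id : ℝ → ℝ)) measurable_id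
    simpa [Set.setOf_eq_eq_singleton] using this
  set S : Set ℝ := {y | 0 < f {y}} ∪ {y | 0 < r {y}} with hSdef
  have hS : S.Countable := hSf.union hSr
  have hnot : ∀ y : ℝ, y ∉ S → f {y} = 0 ∧ r {y} = 0 := by
    intro y hy
    simp only [hSdef, Set.mem_union, Set.mem_setOf_eq, not_or, not_lt, le_zero_iff] at hy
    exact hy
  have main : ∀ (μ : Measure ℝ) (δ : ENNReal), IsFiniteMeasure μ → μ {x} = 0 → 0 < δ →
      ∃ a b : ℝ, a < x ∧ x < b ∧ a ∉ S ∧ b ∉ S ∧ μ (Icc a b) < δ := by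
    intro μ δ hfin hx hδ
    obtain ⟨U, hUsub, hUopen, hUlt⟩ :=
      Set.exists_isOpen_lt_of_lt (μ := μ) {x} δ (by simpa [hx] using hδ)
    have hxU : x ∈ U := hUsub rfl
    obtain ⟨l, u, hxlu, hluU⟩ := mem_nhds_iff_exists_Ioo_subset.mp (hUopen.mem_nhds hxU)
    obtain ⟨p, hp, hpS⟩ := exists_notMem_countable S hS hxlu.1
    obtain ⟨q, hq, hqS⟩ := exists_notMem_countable S hS hxlu.2
    refine ⟨p, q, hp.2, hq.1, hpS, hqS, ?_⟩
    have hsub : Icc p q ⊆ Ioo l u := Icc_subset_Ioo hp.1 hq.2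
    exact lt_of_le_of_lt (measure_mono (hsub.trans hluU)) hUlt
  rcases hatoms x with hx | hx
  · obtain ⟨p, q, h1, h2, h3, h4, h5⟩ := main f δf inferInstance hx hδf
    exact ⟨p, q, h1, h2, (hnot p h3).1, (hnot p h3).2, (hnot q h4).1, (hnot q h4).2, Or.inl h5⟩
  · obtain ⟨p, q, h1, h2, h3, h4, h5⟩ := main r δr inferInstance hx hδr
    exact ⟨p, q, h1, h2, (hnot p h3).1, (hnot p h3).2, (hnot q h4).1, (hnot q h4).2, Or.inr h5⟩

theorem stmt10 (f r : Measure ℝ) [IsFiniteMeasure f] [IsFiniteMeasure r]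
    (hsupp_f : f (Icc 0 1)ᶜ = 0) (hsupp_r : r (Icc 0 1)ᶜ = 0)
    (hatoms : ∀ x : ℝ, f {x} = 0 ∨ r {x} = 0) :
    ∀ ε : ℝ, 0 < ε →
      ∃ (n : ℕ) (ζ : Fin (n + 2) → ℝ),
        StrictMono ζ ∧ ζ 0 = 0 ∧ ζ (Fin.last (n + 1)) = 1 ∧
        (∀ k : Fin (n + 2), k ≠ 0 → k ≠ Fin.last (n + 1) →
          f {ζ k} = 0 ∧ r {ζ k} = 0) ∧
        (∀ k : Fin (n + 1),
          f (Icc (ζ k.castSucc) (ζ k.succ)) < ENNReal.ofReal (ε ^ 3) ∨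
          r (Icc (ζ k.castSucc) (ζ k.succ)) < ENNReal.ofReal (ε ^ 2)) := by
  classical
  intro ε hε
  set δf : ENNReal := ENNReal.ofReal (ε ^ 3) with hδfdef
  set δr : ENNReal := ENNReal.ofReal (ε ^ 2) with hδrdef
  have hδf : 0 < δf := ENNReal.ofReal_pos.mpr (by positivity)
  have hδr : 0 < δr := ENNReal.ofReal_pos.mpr (by positivity)
  choose a b hax hxb haf har hbf hbr hsm using key_lemma f r hatoms hδf hδr
  -- compactness
  obtain ⟨t, ht⟩ := isCompact_Icc.elim_finite_subcover (fun x : ℝ => Ioo (a x) (b x))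
    (fun x => isOpen_Ioo) (fun x hx => Set.mem_iUnion.mpr ⟨x, hax x, hxb x⟩)
  -- partition points
  set P : Finset ℝ :=
    insert 0 (insert 1 ((t.image a ∪ t.image b).filter (fun y => 0 < y ∧ y < 1))) with hPdef
  have h0P : (0 : ℝ) ∈ P := Finset.mem_insert_self _ _
  have h1P : (1 : ℝ) ∈ P := Finset.mem_insert_of_mem (Finset.mem_insert_self _ _)
  have hrange : ∀ y ∈ P, 0 ≤ y ∧ y ≤ 1 := by
    intro y hy
    simp only [hPdef, Finset.mem_insert, Finset.mem_filter] at hy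
    rcases hy with rfl | rfl | ⟨_, h1, h2⟩
    · exact ⟨le_refl 0, zero_le_one⟩
    · exact ⟨zero_le_one, le_refl 1⟩
    · exact ⟨le_of_lt h1, le_of_lt h2⟩
  have hcard2 : 2 ≤ P.card := by
    have : ({0, 1} : Finset ℝ) ⊆ P := by
      intro y hy
      simp only [Finset.mem_insert, Finset.mem_singleton] at hy
      rcases hy with rfl | rfl
      · exact h0P
      · exact h1P
    calc 2 = ({0, 1} : Finset ℝ).card := by norm_num
    _ ≤ P.card := Finset.card_le_card this
  obtain ⟨n, hn⟩ : ∃ n, P.card = n + 2 := ⟨P.card - 2, by omega⟩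
  set e := P.orderIsoOfFin hn with hedef
  set ζ : Fin (n + 2) → ℝ := fun k => (e k : ℝ) with hζdef
  have hsm' : StrictMono ζ := fun i j hij => e.strictMono hij
  have hmemζ : ∀ k, ζ k ∈ P := fun k => (e k).2
  have hsurj : ∀ y ∈ P, ∃ k, ζ k = y := by
    intro y hy
    exact ⟨e.symm ⟨y, hy⟩, by simp [hζdef]⟩
  have hζ0 : ζ 0 = 0 := by
    obtain ⟨k, hk⟩ := hsurj 0 h0P
    have h1 : ζ 0 ≤ ζ k := hsm'.monotone (Fin.zero_le k)
    have h2 : 0 ≤ ζ 0 := (hrange _ (hmemζ 0)).1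
    rw [hk] at h1
    linarith
  have hζlast : ζ (Fin.last (n + 1)) = 1 := by
    obtain ⟨k, hk⟩ := hsurj 1 h1P
    have h1 : ζ k ≤ ζ (Fin.last (n + 1)) := hsm'.monotone (Fin.le_last k)
    have h2 : ζ (Fin.last (n + 1)) ≤ 1 := (hrange _ (hmemζ _)).2
    rw [hk] at h1
    linarith
  refine ⟨n, ζ, hsm', hζ0, hζlast, ?_, ?_⟩
  · -- interior points are non-atoms
    intro k hk0 hklast
    have hlt0 : 0 < ζ k := by
      rw [← hζ0]
      exact hsm' (Fin.pos_iff_ne_zero.mpr hk0)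
    have hlt1 : ζ k < 1 := by
      rw [← hζlast]
      exact hsm' (Fin.lt_last_iff_ne_last.mpr hklast)
    have hmem := hmemζ k
    simp only [hPdef, Finset.mem_insert, Finset.mem_filter, Finset.mem_union,
      Finset.mem_image] at hmem
    rcases hmem with h | h | ⟨h, _⟩
    · exact absurd h (ne_of_gt hlt0)
    · exact absurd h (ne_of_lt hlt1)
    · rcases h with ⟨x, _, hx⟩ | ⟨x, _, hx⟩
      · rw [← hx]; exact ⟨haf x, har x⟩
      · rw [← hx]; exact ⟨hbf x, hbr x⟩
  · -- measure estimate
    intro k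
    set l := ζ k.castSucc with hldef
    set u := ζ k.succ with hudef
    have hlu : l < u := hsm' Fin.castSucc_lt_succ
    have hl0 : 0 ≤ l := by rw [← hζ0]; exact hsm'.monotone (Fin.zero_le _)
    have hu1 : u ≤ 1 := by rw [← hζlast]; exact hsm'.monotone (Fin.le_last _)
    set m := (l + u) / 2 with hmdef
    have hlm : l < m := by rw [hmdef]; linarith
    have hmu : m < u := by rw [hmdef]; linarith
    have hmIcc : m ∈ Icc (0 : ℝ) 1 := ⟨by linarith, by linarith⟩
    obtain ⟨x, hxt, hxm⟩ := Set.mem_iUnion₂.mp (ht hmIcc)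
    have haxl : a x ≤ l := by
      rcases le_or_gt (a x) 0 with h | h
      · linarith
      · have hax1 : a x < 1 := by
          have := hxm.1; linarith
        have haxP : a x ∈ P := by
          simp only [hPdef, Finset.mem_insert, Finset.mem_filter, Finset.mem_union,
            Finset.mem_image]
          exact Or.inr (Or.inr ⟨Or.inl ⟨x, hxt, rfl⟩, h, hax1⟩)
        obtain ⟨j, hj⟩ := hsurj _ haxP
        have hjlt : ζ j < ζ k.succ := by
          rw [hj]
          have := hxm.1
          linarith
        have hjk : j < k.succ := hsm'.lt_iff_lt.mp hjlt
        have hjk' : j ≤ k.castSucc := by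
          rw [Fin.le_def]; rw [Fin.lt_def] at hjk
          simp only [Fin.val_succ, Fin.coe_castSucc] at *
          omega
        calc a x = ζ j := hj.symm
        _ ≤ ζ k.castSucc := hsm'.monotone hjk'
    have hbxu : u ≤ b x := by
      rcases le_or_gt 1 (b x) with h | h
      · linarith
      · have hbx0 : 0 < b x := by
          have := hxm.2; linarith
        have hbxP : b x ∈ P := by
          simp only [hPdef, Finset.mem_insert, Finset.mem_filter, Finset.mem_union,
            Finset.mem_image]
          exact Or.inr (Or.inr ⟨Or.inr ⟨x, hxt, rfl⟩, hbx0, h⟩)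
        obtain ⟨j, hj⟩ := hsurj _ hbxP
        have hjlt : ζ k.castSucc < ζ j := by
          rw [hj]
          have := hxm.2
          linarith
        have hjk : k.castSucc < j := hsm'.lt_iff_lt.mp hjlt
        have hjk' : k.succ ≤ j := by
          rw [Fin.le_def]; rw [Fin.lt_def] at hjk
          simp only [Fin.val_succ, Fin.coe_castSucc] at *
          omega
        calc u = ζ k.succ := rfl
        _ ≤ ζ j := hsm'.monotone hjk'
        _ = b x := hj
    have hsub : Icc l u ⊆ Icc (a x) (b x) := Icc_subset_Icc haxl hbxu
    rcases hsm x with h | h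
    · exact Or.inl (lt_of_le_of_lt (measure_mono hsub) h)
    · exact Or.inr (lt_of_le_of_lt (measure_mono hsub) h)
end

section
/- With N as in the previous statement (eigenvalue counting function of the Neumann Laplacian on (0,1)), the inequality N(510) > N(85) + N(0) + N(85) holds, i.e., 8 > 3 + 1 + 3 = 7. This refutes the subadditivity claim N(λ) ≤ Σᵢ N(dᵢd'ᵢ·λ) for the parameters d₁d'₁ = d₃d'₃ = 1/6, d₂d'₂ = 0, λ = 510 (since 510/6 = 85). -/
open Real

/-- The eigenvalue counting function of the Neumann Laplacian on `(0,1)`: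
the eigenvalues are `λ_n = π²(n−1)²` for `n ≥ 1`, i.e. `π² m²` for `m ≥ 0`. -/
noncomputable def neumannCount (l : ℝ) : ℕ :=
  Nat.card {m : ℕ | (π : ℝ) ^ 2 * (m : ℝ) ^ 2 ≤ l}

lemma count_eq (l : ℝ) (n : ℕ) (h : ∀ m : ℕ, π ^ 2 * (m : ℝ) ^ 2 ≤ l ↔ m < n) :
    neumannCount l = n := by
  unfold neumannCount
  have hs : {m : ℕ | (π : ℝ) ^ 2 * (m : ℝ) ^ 2 ≤ l} = Set.Iio n :=
    Set.ext fun m => h m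
  rw [hs, Nat.card_coe_set_eq, ← Finset.coe_Iio, Set.ncard_coe_finset, Nat.card_Iio]

lemma aux_iff (l : ℝ) (n : ℕ) (hlo : π ^ 2 * ((n : ℝ) - 1) ^ 2 ≤ l)
    (hhi : l < π ^ 2 * (n : ℝ) ^ 2) (hn : 1 ≤ n) :
    ∀ m : ℕ, π ^ 2 * (m : ℝ) ^ 2 ≤ l ↔ m < n := by
  intro m
  have hpi : (0:ℝ) < π := Real.pi_pos
  constructor
  · intro h
    by_contra hm
    push_neg at hm
    have : (n : ℝ) ≤ (m : ℝ) := by exact_mod_cast hm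
    nlinarith [sq_nonneg ((m:ℝ) - n)]
  · intro hm
    have : (m : ℝ) ≤ (n : ℝ) - 1 := by
      have : m + 1 ≤ n := hm
      have := (Nat.cast_le (α := ℝ)).2 this
      push_cast at this; linarith
    have hm0 : (0:ℝ) ≤ (m:ℝ) := Nat.cast_nonneg m
    have hsq : (m:ℝ)^2 ≤ ((n:ℝ)-1)^2 := by nlinarith
    nlinarith [mul_le_mul_of_nonneg_left hsq (sq_nonneg π)]

lemma n0 : neumannCount 0 = 1 := by
  apply count_eq
  apply aux_iff <;> push_cast <;> nlinarith [Real.pi_pos]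

lemma n85 : neumannCount 85 = 3 := by
  apply count_eq
  apply aux_iff <;> push_cast <;> nlinarith [Real.pi_gt_d6, Real.pi_lt_d2]

lemma n510 : neumannCount 510 = 8 := by
  apply count_eq
  apply aux_iff <;> push_cast <;> nlinarith [Real.pi_gt_d6, Real.pi_lt_d2]

/-- The inequality `N(510) > N(85) + N(0) + N(85)` (i.e.
`8 > 3 + 1 + 3`) holds for the Neumann counting function, refuting the
subadditivity claim `N(λ) ≤ Σᵢ N(dᵢd'ᵢ λ)` for `d₁d'₁ = d₃d'₃ = 1/6`,
`d₂d'₂ = 0`, `λ = 510` (note `510/6 = 85`). -/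
theorem stmt16 :
    neumannCount 0 = 1 ∧ (1/6 : ℝ) * 510 = 85 ∧
    neumannCount 510 > neumannCount 85 + neumannCount 0 + neumannCount 85 ∧
    ¬ (neumannCount 510 ≤
        neumannCount ((1/3) * (1/2) * 510) + neumannCount ((0:ℝ) * 510) +
          neumannCount ((1/3) * (1/2) * 510)) := by
  have h1 : ((1/3 : ℝ) * (1/2) * 510) = 85 := by norm_num
  have h2 : ((0:ℝ) * 510) = 0 := by norm_num
  refine ⟨n0, by norm_num, ?_, ?_⟩
  · rw [n0, n85, n510]; norm_num
  · rw [h1, h2, n0, n85, n510]; norm_num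
end
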